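/- Let C be a d-dimensional smooth combinatorial cube in ℝ^d with d ≥ 3, and fix distinct x, y ∈ {1,…,d}. Consider the four (d−2)-dimensional faces F_{xy}, F_{x ȳ}, F_{x̄ y}, F_{x̄ ȳ} of C. If three of these faces are pairwise parallel to each other, then all four are pairwise parallel. -/

import Mathlib

open Pointwise

noncomputable section

/-- A point of `ℝ^d` is a *lattice point* if all its coordinates are integers. -/
def IsLatticePoint {d : ℕ} (x : Fin d → ℝ) : Prop :=
  ∀ i, ∃ n : ℤ, x i = (n : ℝ)

/-- A *polytope* is the convex hull of finitely many points. -/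
def IsPolytope {E : Type*} [AddCommGroup E] [Module ℝ E] (P : Set E) : Prop :=
  ∃ V : Finset E, P = convexHull ℝ (V : Set E)

/-- A *lattice polytope* in `ℝ^d` is the convex hull of finitely many lattice points. -/
def IsLatticePolytope {d : ℕ} (P : Set (Fin d → ℝ)) : Prop :=
  ∃ V : Finset (Fin d → ℝ), (∀ v ∈ V, IsLatticePoint v) ∧
    P = convexHull ℝ (V : Set (Fin d → ℝ))

/-- The subset of `P` on which the linear functional `u` is maximized. -/
def maxFace {E : Type*} [AddCommGroup E] [Module ℝ E] (P : Set E) (u : E →ₗ[ℝ] ℝ) : Set E :=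
  {x ∈ P | ∀ y ∈ P, u y ≤ u x}

/-- `F` is a face of `P` if it is the maximizing set of some linear functional on `P`. -/
def IsFaceOf {E : Type*} [AddCommGroup E] [Module ℝ E] (P F : Set E) : Prop :=
  ∃ u : E →ₗ[ℝ] ℝ, F = maxFace P u

/-- The dimension of a subset: the rank of the direction of its affine span. -/
def dimSet {E : Type*} [AddCommGroup E] [Module ℝ E] (F : Set E) : ℕ :=
  Module.finrank ℝ (affineSpan ℝ F).direction

/-- Two sets are parallel if the directions (linear parts) of their affine spans coincide. -/
def AreParallel {E : Type*} [AddCommGroup E] [Module ℝ E] (F G : Set E) : Prop :=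
  (affineSpan ℝ F).direction = (affineSpan ℝ G).direction

/-- A facet is a face of codimension one. -/
def IsFacetOf {E : Type*} [AddCommGroup E] [Module ℝ E] (P F : Set E) : Prop :=
  IsFaceOf P F ∧ dimSet F + 1 = dimSet P

/-- A vertex of `P` is a point whose singleton is a face of `P`. -/
def IsVertexOf {E : Type*} [AddCommGroup E] [Module ℝ E] (P : Set E) (v : E) : Prop :=
  IsFaceOf P {v}

/-- An edge of `P` is a one-dimensional face of `P`. -/
def IsEdgeOf {E : Type*} [AddCommGroup E] [Module ℝ E] (P F : Set E) : Prop :=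
  IsFaceOf P F ∧ dimSet F = 1

/-- A polytope in `ℝ^d` is simple if every vertex is contained in exactly `d` edges. -/
def IsSimplePolytope {d : ℕ} (P : Set (Fin d → ℝ)) : Prop :=
  ∀ v : Fin d → ℝ, IsVertexOf P v →
    {F : Set (Fin d → ℝ) | IsEdgeOf P F ∧ v ∈ F}.ncard = d

/-- An integer vector is primitive if it is not a nontrivial integer multiple of
another integer vector (in particular it is nonzero). -/
def IsPrimitiveVector {d : ℕ} (u : Fin d → ℤ) : Prop :=
  ∀ (k : ℤ) (w : Fin d → ℤ), u = k • w → IsUnit k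

/-- `u` is a primitive edge direction of `P` at the vertex `v`: a primitive lattice vector
pointing from `v` along an edge of `P` incident to `v`. -/
def IsPrimitiveEdgeDirectionAt {d : ℕ} (P : Set (Fin d → ℝ)) (v : Fin d → ℝ)
    (u : Fin d → ℤ) : Prop :=
  IsPrimitiveVector u ∧
    ∃ F : Set (Fin d → ℝ), IsEdgeOf P F ∧ v ∈ F ∧
      ∃ ε : ℝ, 0 < ε ∧ (v + ε • fun i => (u i : ℝ)) ∈ F

/-- A lattice polytope is smooth if it is simple and, at each vertex, the primitive
edge directions form a `ℤ`-basis of `ℤ^d`. -/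
def IsSmoothPolytope {d : ℕ} (P : Set (Fin d → ℝ)) : Prop :=
  IsLatticePolytope P ∧ IsSimplePolytope P ∧
    ∀ v : Fin d → ℝ, IsVertexOf P v →
      ∃ b : Module.Basis (Fin d) ℤ (Fin d → ℤ), ∀ i, IsPrimitiveEdgeDirectionAt P v (b i)

/-- The unit cube `[0,1]^d`. -/
def unitCube (d : ℕ) : Set (Fin d → ℝ) := {x | ∀ i, x i ∈ Set.Icc (0 : ℝ) 1}

/-- A `d`-dimensional combinatorial cube: a `d`-dimensional lattice polytope whose face
poset is order-isomorphic to the face poset of the unit cube `[0,1]^d`. -/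
def IsCombinatorialCube (d : ℕ) (C : Set (Fin d → ℝ)) : Prop :=
  IsLatticePolytope C ∧ dimSet C = d ∧
    Nonempty ({F : Set (Fin d → ℝ) // IsFaceOf (unitCube d) F} ≃o
              {F : Set (Fin d → ℝ) // IsFaceOf C F})

/-- The pair `(P, Q)` has the Integer Decomposition Property: every lattice point of the
Minkowski sum `P + Q` is a sum of a lattice point of `P` and a lattice point of `Q`. -/
def IsIDPPair {d : ℕ} (P Q : Set (Fin d → ℝ)) : Prop :=
  ∀ x : Fin d → ℝ, IsLatticePoint x → x ∈ P + Q →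
    ∃ p ∈ P, ∃ q ∈ Q, IsLatticePoint p ∧ IsLatticePoint q ∧ x = p + q

/-- `P` and `Q` are Minkowski equivalent (have the same normal fan): two linear functionals
are maximized on the same face of `P` if and only if they are maximized on the same face
of `Q`. -/
def MinkowskiEquivalent {E : Type*} [AddCommGroup E] [Module ℝ E] (P Q : Set E) : Prop :=
  ∀ u v : E →ₗ[ℝ] ℝ, maxFace P u = maxFace P v ↔ maxFace Q u = maxFace Q v

/-- `P` is a `d`-dimensional prismatoid with top facet `T` and bottom facet `B`: a
`d`-dimensional lattice polytope whose face poset is order-isomorphic to the face poset of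
a prism `Q × [0,1]` over a `(d-1)`-dimensional polytope `Q`, where `T` and `B` are the
faces corresponding to `Q × {1}` and `Q × {0}` respectively, and `T` and `B` are parallel. -/
def IsPrismatoid (d : ℕ) (P T B : Set (Fin d → ℝ)) : Prop :=
  IsLatticePolytope P ∧ dimSet P = d ∧
    ∃ Q : Set (Fin (d - 1) → ℝ), IsPolytope Q ∧ dimSet Q = d - 1 ∧
      ∃ φ : {F : Set ((Fin (d - 1) → ℝ) × ℝ) // IsFaceOf (Q ×ˢ Set.Icc (0 : ℝ) 1) F} ≃o
            {F : Set (Fin d → ℝ) // IsFaceOf P F},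
        (∃ hT : IsFaceOf (Q ×ˢ Set.Icc (0 : ℝ) 1) (Q ×ˢ ({1} : Set ℝ)),
            (φ ⟨Q ×ˢ ({1} : Set ℝ), hT⟩).1 = T) ∧
        (∃ hB : IsFaceOf (Q ×ˢ Set.Icc (0 : ℝ) 1) (Q ×ˢ ({0} : Set ℝ)),
            (φ ⟨Q ×ˢ ({0} : Set ℝ), hB⟩).1 = B) ∧
        AreParallel T B

/-- The face `F_I^J` of the unit cube given by disjoint index sets `I` (coordinates pinned
to `0`) and `J` (coordinates pinned to `1`). -/
def cubeFace (d : ℕ) (I J : Set (Fin d)) : Set (Fin d → ℝ) :=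
  {x ∈ unitCube d | (∀ k ∈ I, x k = 0) ∧ (∀ k ∈ J, x k = 1)}

/-- Under a fixed order isomorphism `φ` from the face poset of the unit cube to the face
poset of `C`, the set `F` is the face of `C` corresponding to the face `F_I^J` of the
unit cube. -/
def IsCubeFaceImage {d : ℕ} {C : Set (Fin d → ℝ)}
    (φ : {F : Set (Fin d → ℝ) // IsFaceOf (unitCube d) F} ≃o
         {F : Set (Fin d → ℝ) // IsFaceOf C F})
    (I J : Set (Fin d)) (F : Set (Fin d → ℝ)) : Prop :=
  ∃ h : IsFaceOf (unitCube d) (cubeFace d I J), (φ ⟨cubeFace d I J, h⟩).1 = F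

/-- The last coordinate index of `Fin d` (for `0 < d`). -/
def lastIdx (d : ℕ) (hd : 0 < d) : Fin d := ⟨d - 1, Nat.sub_lt hd Nat.one_pos⟩

/-- The linear functional `x ↦ ⟨y, x⟩ = ∑ i, y i * x i` on `ℝ^d`. -/
def dotL {d : ℕ} (y : Fin d → ℝ) : (Fin d → ℝ) →ₗ[ℝ] ℝ :=
  ∑ i, y i • LinearMap.proj (R := ℝ) (φ := fun _ : Fin d => ℝ) i

/-! ### Auxiliary lemmas -/

lemma maxFace_subset' {E : Type*} [AddCommGroup E] [Module ℝ E] (P : Set E) (u) :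
    maxFace P u ⊆ P := fun _ h => h.1

lemma IsFaceOf.subset' {E : Type*} [AddCommGroup E] [Module ℝ E] {P F : Set E}
    (h : IsFaceOf P F) : F ⊆ P := by obtain ⟨u, rfl⟩ := h; exact maxFace_subset' P u

lemma isFaceOf_self' {E : Type*} [AddCommGroup E] [Module ℝ E] (P : Set E) :
    IsFaceOf P P := by refine ⟨0, ?_⟩; ext z; simp [maxFace]

/-- A level set of a linear functional, as an affine subspace. -/
def levelSet {E : Type*} [AddCommGroup E] [Module ℝ E] (u : E →ₗ[ℝ] ℝ) (c : ℝ) :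
    AffineSubspace ℝ E where
  carrier := {z | u z = c}
  smul_vsub_vadd_mem' := by
    intro t p1 p2 p3 h1 h2 h3
    simp only [Set.mem_setOf_eq] at *
    simp [vsub_eq_sub, vadd_eq_add, map_add, map_smul, map_sub, h1, h2, h3]

lemma face_nonempty' {E : Type*} [AddCommGroup E] [Module ℝ E] {P F : Set E}
    (hP : ∃ V : Finset E, P = convexHull ℝ (V : Set E))
    (hne : P.Nonempty) (hF : IsFaceOf P F) : F.Nonempty := by
  obtain ⟨V, rfl⟩ := hP
  obtain ⟨u, rfl⟩ := hF
  have hVne : V.Nonempty := by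
    by_contra h
    simp only [Finset.not_nonempty_iff_eq_empty] at h
    subst h
    simp at hne
  obtain ⟨v0, hv0V, hv0⟩ := Finset.exists_max_image V u hVne
  refine ⟨v0, subset_convexHull ℝ _ hv0V, ?_⟩
  intro y hy
  have : (convexHull ℝ (V : Set E)) ⊆ {z | u z ≤ u v0} :=
    convexHull_min (fun v hv => hv0 v hv) (convex_halfSpace_le u.isLinear _)
  exact this hy

lemma subset_face_of_subset_span {E : Type*} [AddCommGroup E] [Module ℝ E] {P F Q : Set E}
    (hF : IsFaceOf P F) {p : E} (hp : p ∈ F)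
    (hQ : Q ⊆ P) (hspan : Q ⊆ (affineSpan ℝ F : Set E)) : Q ⊆ F := by
  obtain ⟨u, rfl⟩ := hF
  have hlev : (affineSpan ℝ (maxFace P u) : Set E) ⊆ {z | u z = u p} := by
    have : affineSpan ℝ (maxFace P u) ≤ levelSet u (u p) := by
      apply affineSpan_le.mpr
      intro z hz
      exact le_antisymm (hp.2 z hz.1) (hz.2 p hp.1)
    exact this
  intro q hq
  have hq1 : u q = u p := hlev (hspan hq)
  exact ⟨hQ hq, fun y hy => hq1 ▸ hp.2 y hy⟩

lemma subset_of_dim_le' {E : Type*} [AddCommGroup E] [Module ℝ E] [FiniteDimensional ℝ E]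
    {P F G : Set E}
    (hF : IsFaceOf P F) (hFne : F.Nonempty) (hG : G ⊆ P) (hFG : F ⊆ G)
    (hdim : dimSet G ≤ dimSet F) : G ⊆ F := by
  obtain ⟨p, hp⟩ := hFne
  have hle : affineSpan ℝ F ≤ affineSpan ℝ G := affineSpan_mono ℝ hFG
  have hdir : (affineSpan ℝ F).direction = (affineSpan ℝ G).direction :=
    Submodule.eq_of_le_of_finrank_le (AffineSubspace.direction_le hle) hdim
  have hspan : affineSpan ℝ F = affineSpan ℝ G := by
    apply AffineSubspace.ext_of_direction_eq hdir
    exact ⟨p, subset_affineSpan ℝ F hp, subset_affineSpan ℝ G (hFG hp)⟩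
  exact subset_face_of_subset_span hF hp hG
    (fun q hq => hspan ▸ subset_affineSpan ℝ G hq)

lemma dim_lt_of_ssubset' {E : Type*} [AddCommGroup E] [Module ℝ E] [FiniteDimensional ℝ E]
    {P F G : Set E}
    (hF : IsFaceOf P F) (hFne : F.Nonempty) (hG : G ⊆ P) (hFG : F ⊂ G) :
    dimSet F < dimSet G := by
  by_contra h
  push_neg at h
  exact hFG.2 (subset_of_dim_le' hF hFne hG hFG.1 h)

/-! ### Faces of the unit cube -/

def bval (b : Bool) : ℝ := if b then 1 else 0

def cubeFaceOf {d : ℕ} (s : Fin d → Bool) (T : Finset (Fin d)) : Set (Fin d → ℝ) :=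
  {x ∈ unitCube d | ∀ k ∈ T, x k = bval (s k)}

lemma dotL_apply' {d : ℕ} (y x : Fin d → ℝ) : dotL y x = ∑ i, y i * x i := by
  simp [dotL]

lemma bval_mem_Icc (b : Bool) : bval b ∈ Set.Icc (0:ℝ) 1 := by
  cases b <;> simp [bval]

lemma cubeFaceOf_subset {d : ℕ} {s s' : Fin d → Bool} {T T' : Finset (Fin d)}
    (hT : T ⊆ T') (hs : ∀ k ∈ T, s' k = s k) :
    cubeFaceOf s' T' ⊆ cubeFaceOf s T := by
  rintro z ⟨hz, hz'⟩
  exact ⟨hz, fun k hk => by rw [hz' k (hT hk), hs k hk]⟩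

lemma cubeFaceOf_ssubset {d : ℕ} {s : Fin d → Bool} {T T' : Finset (Fin d)}
    (hT : T ⊂ T') : cubeFaceOf s T' ⊂ cubeFaceOf s T := by
  refine ⟨cubeFaceOf_subset hT.1 (fun _ _ => rfl), ?_⟩
  obtain ⟨k0, hk0T', hk0T⟩ := Finset.exists_of_ssubset hT
  intro hsub
  set z : Fin d → ℝ := fun k => if k ∈ T then bval (s k) else bval (!s k) with hzdef
  have hzcube : z ∈ unitCube d := fun i => by
    by_cases h : i ∈ T <;> simp only [hzdef, h, if_true, if_false] <;> exact bval_mem_Icc _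
  have hz : z ∈ cubeFaceOf s T := ⟨hzcube, fun k hk => by simp [hzdef, hk]⟩
  have hz' := (hsub hz).2 k0 hk0T'
  simp only [hzdef, hk0T, if_false] at hz'
  cases h : s k0 <;> simp [h, bval] at hz'

lemma cubeFaceOf_empty {d : ℕ} (s : Fin d → Bool) : cubeFaceOf s ∅ = unitCube d := by
  ext z; simp [cubeFaceOf]

lemma cubeFaceOf_isFace {d : ℕ} (s : Fin d → Bool) (T : Finset (Fin d)) :
    IsFaceOf (unitCube d) (cubeFaceOf s T) := by
  set w : Fin d → ℝ := fun k => if k ∈ T then (if s k then 1 else -1) else 0 with hw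
  refine ⟨dotL w, ?_⟩
  have hval : ∀ x : Fin d → ℝ, dotL w x = ∑ i ∈ T, (if s i then x i else - x i) := by
    intro x
    rw [dotL_apply']
    rw [← Finset.sum_subset (Finset.subset_univ T) (by intro i _ hi; simp [hw, hi])]
    apply Finset.sum_congr rfl
    intro i hi
    by_cases h : s i <;> simp [hw, hi, h] <;> ring
  set M : ℝ := ∑ i ∈ T, (if s i then (1:ℝ) else 0) with hM
  have hbound : ∀ x ∈ unitCube d, ∀ i ∈ T,
      (if s i then x i else - x i) ≤ (if s i then (1:ℝ) else 0) := by
    intro x hx i _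
    have := hx i
    by_cases h : s i <;> simp [h]
    · exact this.2
    · exact this.1
  have hub : ∀ x ∈ unitCube d, dotL w x ≤ M := by
    intro x hx
    rw [hval, hM]
    exact Finset.sum_le_sum (hbound x hx)
  have hface : ∀ x ∈ cubeFaceOf s T, dotL w x = M := by
    rintro x ⟨hx, hpin⟩
    rw [hval, hM]
    apply Finset.sum_congr rfl
    intro i hi
    rw [hpin i hi]
    cases s i <;> simp [bval]
  ext z
  constructor
  · rintro ⟨hz, hpin⟩
    refine ⟨hz, fun y hy => ?_⟩
    rw [hface z ⟨hz, hpin⟩]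
    exact hub y hy
  · rintro ⟨hz, hmax⟩
    refine ⟨hz, ?_⟩
    have hp0 : (fun k => bval (s k)) ∈ cubeFaceOf s T :=
      ⟨fun i => bval_mem_Icc _, fun k _ => rfl⟩
    have h1 : M ≤ dotL w z := by
      rw [← hface _ hp0]
      exact hmax _ hp0.1
    have h2 : dotL w z = M := le_antisymm (hub z hz) h1
    rw [hval, hM] at h2
    have := (Finset.sum_eq_sum_iff_of_le (hbound z hz)).mp h2
    intro k hk
    have hk' := this k hk
    cases hs : s k <;> rw [hs] at hk' <;> simp at hk' <;> simp [bval, hk']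

lemma not_facet_subset {d : ℕ} {x y : Fin d} (hxy : x ≠ y) (a b : Bool) :
    ¬ cubeFaceOf (fun _ => b) {y} ⊆ cubeFaceOf (fun _ => a) {x} := by
  intro h
  set z : Fin d → ℝ := fun k => if k = y then bval b else bval (!a) with hzdef
  have hzcube : z ∈ unitCube d := fun i => by
    by_cases hi : i = y <;> simp only [hzdef, hi, if_true, if_false] <;> exact bval_mem_Icc _
  have h1 : z ∈ cubeFaceOf (fun _ => b) {y} := by
    refine ⟨hzcube, ?_⟩
    intro k hk
    simp only [Finset.mem_singleton] at hk
    subst hk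
    simp [hzdef]
  have h2 := (h h1).2 x (by simp)
  simp only [hzdef, hxy, if_false] at h2
  cases a <;> simp [bval] at h2

/-! ### Transfer through the order isomorphism -/

section Phi

variable {d : ℕ} {C : Set (Fin d → ℝ)}
  (φ : {F : Set (Fin d → ℝ) // IsFaceOf (unitCube d) F} ≃o
       {F : Set (Fin d → ℝ) // IsFaceOf C F})

lemma phi_le {A B : Set (Fin d → ℝ)} (hA : IsFaceOf (unitCube d) A)
    (hB : IsFaceOf (unitCube d) B) (h : A ⊆ B) :
    ((φ ⟨A, hA⟩ : {F // IsFaceOf C F}).1 ⊆ (φ ⟨B, hB⟩).1) := by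
  have : (⟨A, hA⟩ : {F // IsFaceOf (unitCube d) F}) ≤ ⟨B, hB⟩ := h
  exact φ.le_iff_le.mpr this

lemma phi_le_rev {A B : Set (Fin d → ℝ)} (hA : IsFaceOf (unitCube d) A)
    (hB : IsFaceOf (unitCube d) B)
    (h : ((φ ⟨A, hA⟩ : {F // IsFaceOf C F}).1 ⊆ (φ ⟨B, hB⟩).1)) : A ⊆ B := by
  have : φ ⟨A, hA⟩ ≤ φ ⟨B, hB⟩ := h
  exact φ.le_iff_le.mp this

lemma phi_lt {A B : Set (Fin d → ℝ)} (hA : IsFaceOf (unitCube d) A)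
    (hB : IsFaceOf (unitCube d) B) (h : A ⊂ B) :
    ((φ ⟨A, hA⟩ : {F // IsFaceOf C F}).1 ⊂ (φ ⟨B, hB⟩).1) := by
  have : (⟨A, hA⟩ : {F // IsFaceOf (unitCube d) F}) < ⟨B, hB⟩ := h
  have h2 : φ ⟨A, hA⟩ < φ ⟨B, hB⟩ := φ.lt_iff_lt.mpr this
  exact h2

lemma phi_top (h : IsFaceOf (unitCube d) (unitCube d)) :
    ((φ ⟨unitCube d, h⟩ : {F // IsFaceOf C F}).1 = C) := by
  apply subset_antisymm (φ ⟨unitCube d, h⟩).2.subset'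
  have ha : (φ.symm ⟨C, isFaceOf_self' C⟩).1 ⊆ unitCube d := (φ.symm _).2.subset'
  have h1 : φ.symm ⟨C, isFaceOf_self' C⟩ ≤ ⟨unitCube d, h⟩ := ha
  have h2 := φ.le_iff_le.mpr h1
  rw [OrderIso.apply_symm_apply] at h2
  exact h2

variable (hpoly : ∃ V : Finset (Fin d → ℝ), C = convexHull ℝ (V : Set (Fin d → ℝ)))
  (hdimC : dimSet C = d) (hd : 3 ≤ d)

include hdimC hd

omit hpoly in
lemma C_nonempty : C.Nonempty := by
  rw [Set.nonempty_iff_ne_empty]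
  intro h
  rw [h] at hdimC
  simp only [dimSet] at hdimC
  rw [show affineSpan ℝ (∅ : Set (Fin d → ℝ)) = ⊥ by simp] at hdimC
  rw [AffineSubspace.direction_bot] at hdimC
  simp at hdimC
  omega

include hpoly in
lemma dim_phi (s : Fin d → Bool) (T : Finset (Fin d)) :
    dimSet ((φ ⟨cubeFaceOf s T, cubeFaceOf_isFace s T⟩ : {F // IsFaceOf C F}).1) + T.card = d := by
  have hCne : C.Nonempty := C_nonempty hdimC hd
  have key_le : ∀ n : ℕ, ∀ T : Finset (Fin d), T.card = n →
      dimSet ((φ ⟨cubeFaceOf s T, cubeFaceOf_isFace s T⟩ : {F // IsFaceOf C F}).1) + T.card ≤ d := by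
    intro n
    induction n with
    | zero =>
      intro T hT
      rw [Finset.card_eq_zero] at hT
      subst hT
      have : (⟨cubeFaceOf s ∅, cubeFaceOf_isFace s ∅⟩ : {F // IsFaceOf (unitCube d) F})
          = ⟨unitCube d, cubeFaceOf_empty s ▸ cubeFaceOf_isFace s ∅⟩ :=
        Subtype.ext (cubeFaceOf_empty s)
      rw [this, phi_top]
      simp [hdimC]
    | succ n ih =>
      intro T hT
      have hTne : T.Nonempty := by
        rw [← Finset.card_pos, hT]; omega
      obtain ⟨k, hk⟩ := hTne
      have hss : T.erase k ⊂ T := Finset.erase_ssubset hk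
      have hcard : (T.erase k).card = n := by
        rw [Finset.card_erase_of_mem hk, hT]; rfl
      have hsub := cubeFaceOf_ssubset (s := s) hss
      have hphi := phi_lt φ (cubeFaceOf_isFace s T) (cubeFaceOf_isFace s (T.erase k)) hsub
      have hlt := dim_lt_of_ssubset' (φ ⟨cubeFaceOf s T, _⟩).2
        (face_nonempty' hpoly hCne (φ ⟨cubeFaceOf s T, _⟩).2)
        ((φ ⟨cubeFaceOf s (T.erase k), _⟩).2.subset') hphi
      have := ih (T.erase k) hcard
      omega
  have key_ge : ∀ n : ℕ, ∀ T : Finset (Fin d), T.card + n = d →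
      d ≤ dimSet ((φ ⟨cubeFaceOf s T, cubeFaceOf_isFace s T⟩ : {F // IsFaceOf C F}).1) + T.card := by
    intro n
    induction n with
    | zero => intro T hT; omega
    | succ n ih =>
      intro T hT
      have hne : T ≠ Finset.univ := by
        intro h
        rw [h, Finset.card_univ, Fintype.card_fin] at hT
        omega
      obtain ⟨k, hk⟩ : ∃ k, k ∉ T := by
        by_contra h
        push_neg at h
        exact hne (Finset.eq_univ_iff_forall.mpr h)
      have hss : T ⊂ insert k T := Finset.ssubset_insert hk
      have hcard : (insert k T).card = T.card + 1 := Finset.card_insert_of_notMem hk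
      have hsub := cubeFaceOf_ssubset (s := s) hss
      have hphi := phi_lt φ (cubeFaceOf_isFace s (insert k T)) (cubeFaceOf_isFace s T) hsub
      have hlt := dim_lt_of_ssubset' (φ ⟨cubeFaceOf s (insert k T), _⟩).2
        (face_nonempty' hpoly hCne (φ ⟨cubeFaceOf s (insert k T), _⟩).2)
        ((φ ⟨cubeFaceOf s T, _⟩).2.subset') hphi
      have := ih (insert k T) (by omega)
      omega
  have h1 := key_le T.card T rfl
  have h2 := key_ge (d - T.card) T (by
    have : T.card ≤ d := by
      have := T.card_le_univ
      simpa using this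
    omega)
  omega

end Phi

/-! ### The core linear-algebra lemma -/

lemma core_lemma {d : ℕ} (hd : 3 ≤ d) {C P2 Q2 G11 G12 G21 G22 : Set (Fin d → ℝ)}
    (hP2 : IsFaceOf C P2) (hQ2C : Q2 ⊆ C) (hnsub : ¬ Q2 ⊆ P2)
    (hdP2 : dimSet P2 = d - 1) (hdQ2 : dimSet Q2 = d - 1)
    (hdG11 : dimSet G11 = d - 2) (hdG22 : dimSet G22 = d - 2)
    (h21P : G21 ⊆ P2) (h12Q : G12 ⊆ Q2) (h22P : G22 ⊆ P2) (h22Q : G22 ⊆ Q2)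
    (hG22ne : G22.Nonempty)
    (e12 : AreParallel G11 G12) (e21 : AreParallel G11 G21) :
    AreParallel G11 G22 := by
  set V := (affineSpan ℝ P2).direction with hV
  set W := (affineSpan ℝ Q2).direction with hW
  set U := (affineSpan ℝ G11).direction with hU
  set X := (affineSpan ℝ G22).direction with hX
  have hUV : U ≤ V := by
    rw [hU, e21]
    exact AffineSubspace.direction_le (affineSpan_mono ℝ h21P)
  have hUW : U ≤ W := by
    rw [hU, e12]
    exact AffineSubspace.direction_le (affineSpan_mono ℝ h12Q)
  have hXV : X ≤ V := AffineSubspace.direction_le (affineSpan_mono ℝ h22P)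
  have hXW : X ≤ W := AffineSubspace.direction_le (affineSpan_mono ℝ h22Q)
  obtain ⟨p, hp⟩ := hG22ne
  have hVW : V ≠ W := by
    intro h
    have hspan : affineSpan ℝ P2 = affineSpan ℝ Q2 := by
      apply AffineSubspace.ext_of_direction_eq h
      exact ⟨p, subset_affineSpan ℝ P2 (h22P hp), subset_affineSpan ℝ Q2 (h22Q hp)⟩
    exact hnsub (subset_face_of_subset_span hP2 (h22P hp) hQ2C
      (fun q hq => hspan ▸ subset_affineSpan ℝ Q2 hq))
  have frV : Module.finrank ℝ V = d - 1 := hdP2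
  have frW : Module.finrank ℝ W = d - 1 := hdQ2
  have frU : Module.finrank ℝ U = d - 2 := hdG11
  have frX : Module.finrank ℝ X = d - 2 := hdG22
  have hsup_le : Module.finrank ℝ ↥(V ⊔ W) ≤ d := by
    simpa using Submodule.finrank_le (V ⊔ W)
  have hV_le_sup : Module.finrank ℝ V ≤ Module.finrank ℝ ↥(V ⊔ W) :=
    Submodule.finrank_mono le_sup_left
  have hsup : Module.finrank ℝ ↥(V ⊔ W) = d := by
    rcases eq_or_lt_of_le hsup_le with h | h
    · exact h
    · exfalso
      have h1 : Module.finrank ℝ ↥(V ⊔ W) ≤ Module.finrank ℝ V := by omega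
      have h2 : V ⊔ W = V :=
        (Submodule.eq_of_le_of_finrank_le (le_sup_left : V ≤ V ⊔ W) h1).symm
      have hWV : W ≤ V := by rw [← h2]; exact le_sup_right
      exact hVW (Submodule.eq_of_le_of_finrank_le hWV (by omega)).symm
  have hinf : Module.finrank ℝ ↥(V ⊓ W) = d - 2 := by
    have := Submodule.finrank_sup_add_finrank_inf_eq V W
    omega
  have hUeq : U = V ⊓ W :=
    Submodule.eq_of_le_of_finrank_le (le_inf hUV hUW) (by omega)
  have hXeq : X = V ⊓ W :=
    Submodule.eq_of_le_of_finrank_le (le_inf hXV hXW) (by omega)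
  show U = X
  rw [hUeq, hXeq]

/-! ### Abstract four-faces lemma -/

lemma four_para {d : ℕ} (hd : 3 ≤ d) {C P0 P1 Q0 Q1 G00 G01 G10 G11 : Set (Fin d → ℝ)}
    (hP0 : IsFaceOf C P0) (hP1 : IsFaceOf C P1)
    (hQ0 : IsFaceOf C Q0) (hQ1 : IsFaceOf C Q1)
    (dP0 : dimSet P0 = d - 1) (dP1 : dimSet P1 = d - 1)
    (dQ0 : dimSet Q0 = d - 1) (dQ1 : dimSet Q1 = d - 1)
    (dG00 : dimSet G00 = d - 2) (dG01 : dimSet G01 = d - 2)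
    (dG10 : dimSet G10 = d - 2) (dG11 : dimSet G11 = d - 2)
    (i00P : G00 ⊆ P0) (i00Q : G00 ⊆ Q0)
    (i01P : G01 ⊆ P0) (i01Q : G01 ⊆ Q1)
    (i10P : G10 ⊆ P1) (i10Q : G10 ⊆ Q0)
    (i11P : G11 ⊆ P1) (i11Q : G11 ⊆ Q1)
    (n00 : G00.Nonempty) (n01 : G01.Nonempty) (n10 : G10.Nonempty) (n11 : G11.Nonempty)
    (ns00 : ¬ Q0 ⊆ P0) (ns01 : ¬ Q1 ⊆ P0) (ns10 : ¬ Q0 ⊆ P1) (ns11 : ¬ Q1 ⊆ P1)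
    (h3 : (AreParallel G00 G01 ∧ AreParallel G00 G10 ∧ AreParallel G01 G10) ∨
          (AreParallel G00 G01 ∧ AreParallel G00 G11 ∧ AreParallel G01 G11) ∨
          (AreParallel G00 G10 ∧ AreParallel G00 G11 ∧ AreParallel G10 G11) ∨
          (AreParallel G01 G10 ∧ AreParallel G01 G11 ∧ AreParallel G10 G11)) :
    AreParallel G00 G01 ∧ AreParallel G00 G10 ∧ AreParallel G00 G11 ∧
    AreParallel G01 G10 ∧ AreParallel G01 G11 ∧ AreParallel G10 G11 := by
  unfold AreParallel at h3 ⊢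
  rcases h3 with ⟨a, b, c⟩ | ⟨a, b, c⟩ | ⟨a, b, c⟩ | ⟨a, b, c⟩
  · -- G00, G01, G10 pairwise parallel; deduce G11
    have o : (affineSpan ℝ G00).direction = (affineSpan ℝ G11).direction :=
      core_lemma hd hP1 hQ1.subset' ns11 dP1 dQ1 dG00 dG11 i10P i01Q i11P i11Q n11 a b
    exact ⟨a, b, o, c, a.symm.trans o, b.symm.trans o⟩
  · -- G00, G01, G11 pairwise parallel; deduce G10
    have o : (affineSpan ℝ G01).direction = (affineSpan ℝ G10).direction :=
      core_lemma hd hP1 hQ0.subset' ns10 dP1 dQ0 dG01 dG10 i11P i00Q i10P i10Q n10 a.symm c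
    exact ⟨a, a.trans o, b, o, c, o.symm.trans (a.symm.trans b)⟩
  · -- G00, G10, G11 pairwise parallel; deduce G01
    have o : (affineSpan ℝ G10).direction = (affineSpan ℝ G01).direction :=
      core_lemma hd hP0 hQ1.subset' ns01 dP0 dQ1 dG10 dG01 i00P i11Q i01P i01Q n01 c a.symm
    exact ⟨a.trans o, a, b, o.symm, (a.trans o).symm.trans b, c⟩
  · -- G01, G10, G11 pairwise parallel; deduce G00
    have o : (affineSpan ℝ G11).direction = (affineSpan ℝ G00).direction :=
      core_lemma hd hP0 hQ0.subset' ns00 dP0 dQ0 dG11 dG00 i01P i10Q i00P i00Q n00 c.symm b.symm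
    exact ⟨o.symm.trans b.symm, o.symm.trans c.symm, o.symm, a, b, c⟩

/-- For a `d`-dimensional smooth combinatorial cube with `d ≥ 3` and distinct
`x, y`, if three of the four `(d-2)`-dimensional faces `F_{xy}`, `F_{x ȳ}`, `F_{x̄ y}`,
`F_{x̄ ȳ}` are pairwise parallel, then all four are pairwise parallel. -/
theorem three_parallel_implies_fourth
    (d : ℕ) (hd : 3 ≤ d) (C : Set (Fin d → ℝ))
    (hC : IsCombinatorialCube d C) (hsmooth : IsSmoothPolytope C)
    (φ : {F : Set (Fin d → ℝ) // IsFaceOf (unitCube d) F} ≃o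
         {F : Set (Fin d → ℝ) // IsFaceOf C F})
    (x y : Fin d) (hxy : x ≠ y)
    (Fxy Fxby Fbxy Fbxby : Set (Fin d → ℝ))
    (hFxy : IsCubeFaceImage φ {x, y} ∅ Fxy)
    (hFxby : IsCubeFaceImage φ {x} {y} Fxby)
    (hFbxy : IsCubeFaceImage φ {y} {x} Fbxy)
    (hFbxby : IsCubeFaceImage φ ∅ {x, y} Fbxby)
    (h3 : (AreParallel Fxy Fxby ∧ AreParallel Fxy Fbxy ∧ AreParallel Fxby Fbxy) ∨
          (AreParallel Fxy Fxby ∧ AreParallel Fxy Fbxby ∧ AreParallel Fxby Fbxby) ∨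
          (AreParallel Fxy Fbxy ∧ AreParallel Fxy Fbxby ∧ AreParallel Fbxy Fbxby) ∨
          (AreParallel Fxby Fbxy ∧ AreParallel Fxby Fbxby ∧ AreParallel Fbxy Fbxby)) :
    AreParallel Fxy Fxby ∧ AreParallel Fxy Fbxy ∧ AreParallel Fxy Fbxby ∧
    AreParallel Fxby Fbxy ∧ AreParallel Fxby Fbxby ∧ AreParallel Fbxy Fbxby := by
  
  classical
  obtain ⟨hlat, hdimC, -⟩ := hC
  obtain ⟨V, -, hV⟩ := hlat
  have hpoly : ∃ V : Finset (Fin d → ℝ), C = convexHull ℝ (V : Set (Fin d → ℝ)) := ⟨V, hV⟩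
  have hCne : C.Nonempty := C_nonempty hdimC hd
  have hyx : y ≠ x := hxy.symm
  have e00 : cubeFace d {x, y} ∅ = cubeFaceOf (fun k => if k = x then false else false) {x, y} := by
    ext z
    simp only [cubeFace, cubeFaceOf, Set.mem_setOf_eq, Set.mem_insert_iff, Set.mem_singleton_iff,
      Set.mem_empty_iff_false, Finset.mem_insert, Finset.mem_singleton, bval, ite_self,
      Bool.false_eq_true, if_false]
    tauto
  have e01 : cubeFace d {x} {y} = cubeFaceOf (fun k => if k = x then false else true) {x, y} := by
    ext z
    constructor
    · rintro ⟨hz, h0, h1⟩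
      refine ⟨hz, ?_⟩
      intro k hk
      simp only [Finset.mem_insert, Finset.mem_singleton] at hk
      rcases hk with rfl | rfl
      · simp [bval, h0 k rfl]
      · simp [bval, hyx, h1 k rfl]
    · rintro ⟨hz, hp⟩
      refine ⟨hz, ?_, ?_⟩
      · intro k hk
        simp only [Set.mem_singleton_iff] at hk
        subst hk
        have := hp k (by simp)
        simpa [bval] using this
      · intro k hk
        simp only [Set.mem_singleton_iff] at hk
        subst hk
        have := hp k (by simp)
        simpa [bval, hyx] using this
  have e10 : cubeFace d {y} {x} = cubeFaceOf (fun k => if k = x then true else false) {x, y} := by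
    ext z
    constructor
    · rintro ⟨hz, h0, h1⟩
      refine ⟨hz, ?_⟩
      intro k hk
      simp only [Finset.mem_insert, Finset.mem_singleton] at hk
      rcases hk with rfl | rfl
      · simp [bval, h1 k rfl]
      · simp [bval, hyx, h0 k rfl]
    · rintro ⟨hz, hp⟩
      refine ⟨hz, ?_, ?_⟩
      · intro k hk
        simp only [Set.mem_singleton_iff] at hk
        subst hk
        have := hp k (by simp)
        simpa [bval, hyx] using this
      · intro k hk
        simp only [Set.mem_singleton_iff] at hk
        subst hk
        have := hp k (by simp)
        simpa [bval] using this
  have e11 : cubeFace d ∅ {x, y} = cubeFaceOf (fun k => if k = x then true else true) {x, y} := by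
    ext z
    simp only [cubeFace, cubeFaceOf, Set.mem_setOf_eq, Set.mem_insert_iff, Set.mem_singleton_iff,
      Set.mem_empty_iff_false, Finset.mem_insert, Finset.mem_singleton, bval, ite_self, if_true]
    tauto
  obtain ⟨h00, f00⟩ := hFxy
  obtain ⟨h01, f01⟩ := hFxby
  obtain ⟨h10, f10⟩ := hFbxy
  obtain ⟨h11, f11⟩ := hFbxby
  have g00 : Fxy = (φ ⟨cubeFaceOf (fun k => if k = x then false else false) {x, y},
      cubeFaceOf_isFace _ _⟩).1 := by
    rw [← f00]
    exact congrArg (fun t => (φ t).1) (Subtype.ext e00)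
  have g01 : Fxby = (φ ⟨cubeFaceOf (fun k => if k = x then false else true) {x, y},
      cubeFaceOf_isFace _ _⟩).1 := by
    rw [← f01]
    exact congrArg (fun t => (φ t).1) (Subtype.ext e01)
  have g10 : Fbxy = (φ ⟨cubeFaceOf (fun k => if k = x then true else false) {x, y},
      cubeFaceOf_isFace _ _⟩).1 := by
    rw [← f10]
    exact congrArg (fun t => (φ t).1) (Subtype.ext e10)
  have g11 : Fbxby = (φ ⟨cubeFaceOf (fun k => if k = x then true else true) {x, y},
      cubeFaceOf_isFace _ _⟩).1 := by
    rw [← f11]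
    exact congrArg (fun t => (φ t).1) (Subtype.ext e11)
  have card2 : ({x, y} : Finset (Fin d)).card = 2 := Finset.card_pair hxy
  have dimG : ∀ s : Fin d → Bool,
      dimSet ((φ ⟨cubeFaceOf s {x, y}, cubeFaceOf_isFace s {x, y}⟩).1) = d - 2 := by
    intro s
    have h := dim_phi φ hpoly hdimC hd s {x, y}
    rw [card2] at h
    omega
  have dimP : ∀ (w : Fin d) (s : Fin d → Bool),
      dimSet ((φ ⟨cubeFaceOf s {w}, cubeFaceOf_isFace s {w}⟩).1) = d - 1 := by
    intro w s
    have h := dim_phi φ hpoly hdimC hd s {w}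
    rw [Finset.card_singleton] at h
    omega
  have hsubP : ∀ a b : Bool,
      (φ ⟨cubeFaceOf (fun k => if k = x then a else b) {x, y}, cubeFaceOf_isFace _ _⟩).1 ⊆
      (φ ⟨cubeFaceOf (fun _ => a) {x}, cubeFaceOf_isFace _ _⟩).1 := by
    intro a b
    apply phi_le
    apply cubeFaceOf_subset (by simp)
    intro k hk
    simp only [Finset.mem_singleton] at hk
    subst hk
    simp
  have hsubQ : ∀ a b : Bool,
      (φ ⟨cubeFaceOf (fun k => if k = x then a else b) {x, y}, cubeFaceOf_isFace _ _⟩).1 ⊆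
      (φ ⟨cubeFaceOf (fun _ => b) {y}, cubeFaceOf_isFace _ _⟩).1 := by
    intro a b
    apply phi_le
    apply cubeFaceOf_subset (by simp)
    intro k hk
    simp only [Finset.mem_singleton] at hk
    subst hk
    simp [hyx]
  have hns : ∀ a b : Bool,
      ¬ (φ ⟨cubeFaceOf (fun _ => b) {y}, cubeFaceOf_isFace _ _⟩).1 ⊆
        (φ ⟨cubeFaceOf (fun _ => a) {x}, cubeFaceOf_isFace _ _⟩).1 := by
    intro a b h
    exact not_facet_subset hxy a b (phi_le_rev φ _ _ h)
  have hne : ∀ s : Fin d → Bool,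
      ((φ ⟨cubeFaceOf s {x, y}, cubeFaceOf_isFace s {x, y}⟩).1 : Set (Fin d → ℝ)).Nonempty :=
    fun s => face_nonempty' hpoly hCne (φ _).2
  rw [g00, g01, g10, g11] at h3 ⊢
  exact four_para hd
    (φ ⟨cubeFaceOf (fun _ => false) {x}, cubeFaceOf_isFace _ _⟩).2
    (φ ⟨cubeFaceOf (fun _ => true) {x}, cubeFaceOf_isFace _ _⟩).2
    (φ ⟨cubeFaceOf (fun _ => false) {y}, cubeFaceOf_isFace _ _⟩).2
    (φ ⟨cubeFaceOf (fun _ => true) {y}, cubeFaceOf_isFace _ _⟩).2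
    (dimP x (fun _ => false)) (dimP x (fun _ => true))
    (dimP y (fun _ => false)) (dimP y (fun _ => true))
    (dimG (fun k => if k = x then false else false)) (dimG (fun k => if k = x then false else true))
    (dimG (fun k => if k = x then true else false)) (dimG (fun k => if k = x then true else true))
    (hsubP false false) (hsubQ false false) (hsubP false true) (hsubQ false true)
    (hsubP true false) (hsubQ true false) (hsubP true true) (hsubQ true true)
    (hne _) (hne _) (hne _) (hne _)
    (hns false false) (hns false true) (hns true false) (hns true true)
    h3
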